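/- Let Γ be a grid (an (a × b)-grid for some a, b ≥ 1) and let r_1 ≤ r_2. For each i ∈ {1,2}, let Z_i be an (r_i × r_i)-grid that is a minor of Γ with minor mapping μ_i, and assume μ_1(V(Z_1)) ∩ μ_2(V(Z_2)) = ∅ (where μ_i(V(Z_i)) denotes the union of the sets μ_i(v) over v ∈ V(Z_i)). For each i ∈ {1,2}, let Y_i be the set of vertices in the first row of Z_i, and for each v ∈ Y_i pick some q(v) ∈ μ_i(v); let W_i = { q(v) : v ∈ Y_i }. Then W_1 ∪ W_2 is (1/384)-cut-linked in Γ. -/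

import Mathlib

/-- `μ` is a minor mapping witnessing that `H` is a minor of `G`: branch sets are
nonempty, pairwise disjoint, connected, and every edge of `H` is realized by an edge of
`G` between the corresponding branch sets. -/
def IsMinorMapping {V W : Type*} (G : SimpleGraph V) (H : SimpleGraph W)
    (μ : W → Set V) : Prop :=
  (∀ w, (μ w).Nonempty) ∧
  (Pairwise fun w w' => Disjoint (μ w) (μ w')) ∧
  (∀ w, (G.induce (μ w)).Connected) ∧
  (∀ ⦃w w'⦄, H.Adj w w' → ∃ u ∈ μ w, ∃ v ∈ μ w', G.Adj u v)

/-- Number of edges of `G` crossing the cut `(A, Aᶜ)`. -/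
noncomputable def cutSize {V : Type*} (G : SimpleGraph V) (A : Set V) : ℕ :=
  {e : Sym2 V | e ∈ G.edgeSet ∧ ∃ u ∈ A, ∃ v ∈ Aᶜ, e = s(u, v)}.ncard

/-- `X` is `α`-cut-linked in `G`. -/
def CutLinked {V : Type*} (G : SimpleGraph V) (α : ℝ) (X : Set V) : Prop :=
  ∀ A : Set V,
    α * (min ((A ∩ X).ncard) ((Aᶜ ∩ X).ncard) : ℕ) ≤ (cutSize G A : ℝ)

/-- The `(a × b)`-grid graph: the box product of two path graphs. -/
def gridGraph (a b : ℕ) : SimpleGraph (Fin a × Fin b) :=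
  (SimpleGraph.pathGraph a).boxProd (SimpleGraph.pathGraph b)


open SimpleGraph

namespace Aux

/-- Connectivity within a vertex set `S`, as a relation. -/
def Conn {V : Type*} (G : SimpleGraph V) (S : Set V) (u v : V) : Prop :=
  Relation.ReflTransGen (fun x y => G.Adj x y ∧ x ∈ S ∧ y ∈ S) u v

theorem Conn.mono {V : Type*} {G : SimpleGraph V} {S S' : Set V} (hSS : S ⊆ S')
    {u v : V} (h : Conn G S u v) : Conn G S' u v :=
  Relation.ReflTransGen.mono (fun _ _ ⟨ha, hx, hy⟩ => ⟨ha, hSS hx, hSS hy⟩) _ _ h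

theorem induce_conn {V : Type*} {G : SimpleGraph V} {S : Set V}
    (h : (G.induce S).Connected) {u v : V} (hu : u ∈ S) (hv : v ∈ S) :
    Conn G S u v := by
  have hr : (G.induce S).Reachable ⟨u, hu⟩ ⟨v, hv⟩ := h.preconnected _ _
  rw [reachable_iff_reflTransGen] at hr
  exact Relation.ReflTransGen.lift (f := (Subtype.val : S → V))
    (p := fun x y => G.Adj x y ∧ x ∈ S ∧ y ∈ S)
    (fun a b (hab : (G.induce S).Adj a b) => ⟨hab, a.2, b.2⟩) _ _ hr

/-- From connectivity inside `S` and points on both sides of `A`, extract a crossing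
adjacent pair inside `S`. -/
theorem conn_cross {V : Type*} {G : SimpleGraph V} {S A : Set V} {u v : V}
    (h : Conn G S u v) (hu : u ∈ A) (hv : v ∉ A) :
    ∃ x ∈ S, ∃ y ∈ S, G.Adj x y ∧ x ∈ A ∧ y ∉ A := by
  induction h with
  | refl => exact absurd hu hv
  | tail hub hbc ih =>
    rename_i b c
    by_cases hb : b ∈ A
    · exact ⟨b, hbc.2.1, c, hbc.2.2, hbc.1, hb, hv⟩
    · exact ih hb

theorem crossing_mem {V : Type*} {G : SimpleGraph V} {A : Set V} {x y : V}
    (hadj : G.Adj x y) (hx : x ∈ A) (hy : y ∉ A) :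
    s(x, y) ∈ {e : Sym2 V | e ∈ G.edgeSet ∧ ∃ u ∈ A, ∃ v ∈ Aᶜ, e = s(u, v)} :=
  ⟨hadj, x, hx, y, hy, rfl⟩

theorem crossing_mem' {V : Type*} {G : SimpleGraph V} {A : Set V} {x y : V}
    (hadj : G.Adj x y) (hx : x ∈ Aᶜ) (hy : y ∉ Aᶜ) :
    s(x, y) ∈ {e : Sym2 V | e ∈ G.edgeSet ∧ ∃ u ∈ A, ∃ v ∈ Aᶜ, e = s(u, v)} := by
  refine ⟨hadj, y, by simpa using hy, x, hx, Sym2.eq_swap⟩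

/-- Counting pairwise-disjoint "mixed" connected pieces: each contributes a distinct
crossing edge. -/
theorem count_disj_le_cutSize {V : Type*} [Fintype V] {G : SimpleGraph V} {A : Set V}
    {ι : Type*} (T : Finset ι) (S : ι → Set V)
    (hdisj : ∀ i ∈ T, ∀ j ∈ T, i ≠ j → Disjoint (S i) (S j))
    (hmix : ∀ i ∈ T, ∃ x ∈ S i, ∃ y ∈ S i, G.Adj x y ∧
      s(x, y) ∈ {e : Sym2 V | e ∈ G.edgeSet ∧ ∃ u ∈ A, ∃ v ∈ Aᶜ, e = s(u, v)}) :
    T.card ≤ cutSize G A := by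
  classical
  set C : Set (Sym2 V) := {e : Sym2 V | e ∈ G.edgeSet ∧ ∃ u ∈ A, ∃ v ∈ Aᶜ, e = s(u, v)} with hC
  have hfin : C.Finite := Set.toFinite _
  rcases Finset.eq_empty_or_nonempty T with rfl | ⟨i₀, hi₀⟩
  · simp
  have : Nonempty V := ⟨(hmix i₀ hi₀).choose⟩
  have hmix' : ∀ i, ∃ x, ∃ y, i ∈ T → (x ∈ S i ∧ y ∈ S i ∧ s(x, y) ∈ C) := by
    intro i
    by_cases hi : i ∈ T
    · obtain ⟨x, hx, y, hy, _, hc⟩ := hmix i hi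
      exact ⟨x, y, fun _ => ⟨hx, hy, hc⟩⟩
    · exact ⟨Classical.arbitrary V, Classical.arbitrary V, fun h => absurd h hi⟩
  choose x y hxy using hmix'
  have hx : ∀ i ∈ T, x i ∈ S i := fun i hi => (hxy i hi).1
  have hy : ∀ i ∈ T, y i ∈ S i := fun i hi => (hxy i hi).2.1
  have hcross : ∀ i ∈ T, s(x i, y i) ∈ C := fun i hi => (hxy i hi).2.2
  have hinj : Set.InjOn (fun i => s(x i, y i)) T := by
    intro i hi j hj hij
    by_contra hne
    have h1 : x i ∈ S j := by
      have := Sym2.eq_iff.mp hij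
      rcases this with ⟨h1, h2⟩ | ⟨h1, h2⟩
      · exact h1 ▸ hx j hj
      · exact h1 ▸ hy j hj
    exact (hdisj i hi j hj hne).ne_of_mem (hx i hi) h1 rfl
  calc T.card = (T.image (fun i => s(x i, y i))).card :=
        (Finset.card_image_of_injOn hinj).symm
    _ ≤ hfin.toFinset.card := by
        apply Finset.card_le_card
        intro e he
        rcases Finset.mem_image.mp he with ⟨i, hi, rfl⟩
        exact hfin.mem_toFinset.mpr (hcross i hi)
    _ = cutSize G A := by rw [cutSize, ← Set.ncard_coe_finset, hfin.coe_toFinset]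

end Aux

namespace Aux

theorem grid_adj {a b : ℕ} {p q : Fin a × Fin b} :
    (gridGraph a b).Adj p q ↔
      ((pathGraph a).Adj p.1 q.1 ∧ p.2 = q.2) ∨ ((pathGraph b).Adj p.2 q.2 ∧ p.1 = q.1) := by
  cases p; cases q; exact boxProd_adj

theorem path_adj_step {n : ℕ} {x y : Fin n} (h : (pathGraph n).Adj x y) :
    (y : ℕ) ≤ x + 1 ∧ (x : ℕ) ≤ y + 1 := by
  rcases pathGraph_adj.mp h with h | h <;> omega

theorem grid_adj_step2 {a b : ℕ} {p q : Fin a × Fin b} (h : (gridGraph a b).Adj p q) :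
    (q.2 : ℕ) ≤ p.2 + 1 ∧ (p.2 : ℕ) ≤ q.2 + 1 := by
  rcases grid_adj.mp h with ⟨_, h2⟩ | ⟨h2, _⟩
  · omega
  · exact path_adj_step h2

theorem grid_adj_step1 {a b : ℕ} {p q : Fin a × Fin b} (h : (gridGraph a b).Adj p q) :
    (q.1 : ℕ) ≤ p.1 + 1 ∧ (p.1 : ℕ) ≤ q.1 + 1 := by
  rcases grid_adj.mp h with ⟨h1, _⟩ | ⟨_, h1⟩
  · exact path_adj_step h1
  · omega

/-- Rows of the grid are connected within themselves. -/
theorem row_conn {a b : ℕ} (x : Fin a) (y₁ y₂ : Fin b) :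
    Conn (gridGraph a b) {p | p.1 = x} (x, y₁) (x, y₂) := by
  have hr : (pathGraph b).Reachable y₁ y₂ := pathGraph_preconnected b y₁ y₂
  rw [reachable_iff_reflTransGen] at hr
  exact Relation.ReflTransGen.lift (f := fun y => ((x, y) : Fin a × Fin b))
    (p := fun p q => (gridGraph a b).Adj p q ∧ p ∈ {p : Fin a × Fin b | p.1 = x} ∧
      q ∈ {p : Fin a × Fin b | p.1 = x})
    (fun y y' hy => ⟨grid_adj.mpr (Or.inr ⟨hy, rfl⟩), rfl, rfl⟩) _ _ hr

/-- Columns of the grid are connected within themselves. -/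
theorem col_conn {a b : ℕ} (y : Fin b) (x₁ x₂ : Fin a) :
    Conn (gridGraph a b) {p | p.2 = y} (x₁, y) (x₂, y) := by
  have hr : (pathGraph a).Reachable x₁ x₂ := pathGraph_preconnected a x₁ x₂
  rw [reachable_iff_reflTransGen] at hr
  exact Relation.ReflTransGen.lift (f := fun x => ((x, y) : Fin a × Fin b))
    (p := fun p q => (gridGraph a b).Adj p q ∧ p ∈ {p : Fin a × Fin b | p.2 = y} ∧
      q ∈ {p : Fin a × Fin b | p.2 = y})
    (fun x x' hx => ⟨grid_adj.mpr (Or.inl ⟨hx, rfl⟩), rfl, rfl⟩) _ _ hr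

/-- Union of branch sets over a connected index set is connected. -/
theorem union_conn {V W : Type*} {G : SimpleGraph V} {H : SimpleGraph W} {μ : W → Set V}
    (hconn : ∀ w, (G.induce (μ w)).Connected)
    (hedge : ∀ ⦃w w'⦄, H.Adj w w' → ∃ u ∈ μ w, ∃ v ∈ μ w', G.Adj u v)
    {T : Set W} {w w' : W} (hw : w ∈ T) (hchain : Conn H T w w')
    {p q : V} (hp : p ∈ μ w) (hq : q ∈ μ w') :
    Conn G (⋃ t ∈ T, μ t) p q := by
  induction hchain generalizing q with
  | refl =>
    exact (induce_conn (hconn w) hp hq).mono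
      (Set.subset_biUnion_of_mem (u := fun t => μ t) hw)
  | tail hub step ih =>
    rename_i bb cc
    obtain ⟨hadj, hbT, hcT⟩ := step
    obtain ⟨x, hx, y, hy, hxy⟩ := hedge hadj
    refine Relation.ReflTransGen.trans (ih (q := x) hx) ?_
    refine Relation.ReflTransGen.head ⟨hxy, ?_, ?_⟩ ?_
    · exact Set.mem_biUnion hbT hx
    · exact Set.mem_biUnion hcT hy
    · exact (induce_conn (hconn cc) hy hq).mono
        (Set.subset_biUnion_of_mem (u := fun t => μ t) hcT)

end Aux

namespace Aux

/-- Discrete intermediate value theorem along a connection. -/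
theorem conn_ivt {V : Type*} {G : SimpleGraph V} {S : Set V} (f : V → ℕ)
    (hstep : ∀ x y, G.Adj x y → f y ≤ f x + 1 ∧ f x ≤ f y + 1)
    {u v : V} (h : Conn G S u v) (hu : u ∈ S) :
    ∀ k, min (f u) (f v) ≤ k → k ≤ max (f u) (f v) → ∃ w ∈ S, f w = k := by
  induction h with
  | refl =>
    intro k h1 h2
    have : k = f u := by omega
    exact ⟨u, hu, this.symm⟩
  | tail hub step ih =>
    rename_i bb cc
    obtain ⟨hadj, hb, hc⟩ := step
    intro k h1 h2
    by_cases hbet : min (f u) (f bb) ≤ k ∧ k ≤ max (f u) (f bb)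
    · exact ih k hbet.1 hbet.2
    · have hs := hstep _ _ hadj
      have : k = f bb ∨ k = f cc := by omega
      rcases this with h | h
      · exact ⟨bb, hb, h.symm⟩
      · exact ⟨cc, hc, h.symm⟩

/-- Cross-intersecting families of integer intervals: one family has a common point. -/
theorem cross_intervals {r s : ℕ} (I : Fin r → Finset ℕ) (J : Fin s → Finset ℕ)
    (hIne : ∀ i, (I i).Nonempty) (hJne : ∀ j, (J j).Nonempty)
    (hIconv : ∀ i k₁ k₂ k, k₁ ∈ I i → k₂ ∈ I i → k₁ ≤ k → k ≤ k₂ → k ∈ I i)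
    (hJconv : ∀ j k₁ k₂ k, k₁ ∈ J j → k₂ ∈ J j → k₁ ≤ k → k ≤ k₂ → k ∈ J j)
    (hmeet : ∀ i j, ∃ k, k ∈ I i ∧ k ∈ J j) (hr : 1 ≤ r) (hs : 1 ≤ s) :
    (∃ k, ∀ i, k ∈ I i) ∨ (∃ k, ∀ j, k ∈ J j) := by
  have huI : (Finset.univ : Finset (Fin r)).Nonempty := ⟨⟨0, hr⟩, Finset.mem_univ _⟩
  have huJ : (Finset.univ : Finset (Fin s)).Nonempty := ⟨⟨0, hs⟩, Finset.mem_univ _⟩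
  obtain ⟨i₀, -, hi₀⟩ := Finset.exists_min_image Finset.univ
    (fun i => (I i).max' (hIne i)) huI
  obtain ⟨j₀, -, hj₀⟩ := Finset.exists_min_image Finset.univ
    (fun j => (J j).max' (hJne j)) huJ
  by_cases hc : (I i₀).max' (hIne i₀) ≤ (J j₀).max' (hJne j₀)
  · right
    refine ⟨(I i₀).max' (hIne i₀), fun j => ?_⟩
    obtain ⟨k, hkI, hkJ⟩ := hmeet i₀ j
    refine hJconv j k ((J j).max' (hJne j)) _ hkJ ((J j).max'_mem (hJne j))
      (Finset.le_max' _ _ hkI) (le_trans hc (hj₀ j (Finset.mem_univ _)))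
  · left
    refine ⟨(J j₀).max' (hJne j₀), fun i => ?_⟩
    obtain ⟨k, hkI, hkJ⟩ := hmeet i j₀
    refine hIconv i k ((I i).max' (hIne i)) _ hkI ((I i).max'_mem (hIne i))
      (Finset.le_max' _ _ hkJ) (le_trans (le_of_not_ge hc) (hi₀ i (Finset.mem_univ _)))

section Grid

variable {a b r : ℕ} {μ : Fin r × Fin r → Set (Fin a × Fin b)}

/-- Union of branch sets over a row of the small grid. -/
def RowU (μ : Fin r × Fin r → Set (Fin a × Fin b)) (i : Fin r) : Set (Fin a × Fin b) :=
  ⋃ t ∈ {v : Fin r × Fin r | v.1 = i}, μ t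

/-- Union of branch sets over a column of the small grid. -/
def ColU (μ : Fin r × Fin r → Set (Fin a × Fin b)) (j : Fin r) : Set (Fin a × Fin b) :=
  ⋃ t ∈ {v : Fin r × Fin r | v.2 = j}, μ t

theorem mem_RowU {i : Fin r} {p : Fin a × Fin b} :
    p ∈ RowU μ i ↔ ∃ j, p ∈ μ (i, j) := by
  simp only [RowU, Set.mem_iUnion, Set.mem_setOf_eq]
  constructor
  · rintro ⟨⟨i', j⟩, rfl, hp⟩; exact ⟨j, hp⟩
  · rintro ⟨j, hp⟩; exact ⟨(i, j), rfl, hp⟩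

theorem mem_ColU {j : Fin r} {p : Fin a × Fin b} :
    p ∈ ColU μ j ↔ ∃ i, p ∈ μ (i, j) := by
  simp only [ColU, Set.mem_iUnion, Set.mem_setOf_eq]
  constructor
  · rintro ⟨⟨i, j'⟩, rfl, hp⟩; exact ⟨i, hp⟩
  · rintro ⟨i, hp⟩; exact ⟨(i, j), rfl, hp⟩

variable (h : IsMinorMapping (gridGraph a b) (gridGraph r r) μ)
include h

theorem RowU_conn {i : Fin r} {p q : Fin a × Fin b} (hp : p ∈ RowU μ i)
    (hq : q ∈ RowU μ i) : Conn (gridGraph a b) (RowU μ i) p q := by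
  obtain ⟨j₁, hp⟩ := mem_RowU.mp hp
  obtain ⟨j₂, hq⟩ := mem_RowU.mp hq
  exact union_conn h.2.2.1 h.2.2.2 (T := {v : Fin r × Fin r | v.1 = i})
    (show ((i, j₁) : Fin r × Fin r) ∈ {v : Fin r × Fin r | v.1 = i} from rfl) (row_conn i j₁ j₂) hp hq

theorem ColU_conn {j : Fin r} {p q : Fin a × Fin b} (hp : p ∈ ColU μ j)
    (hq : q ∈ ColU μ j) : Conn (gridGraph a b) (ColU μ j) p q := by
  obtain ⟨i₁, hp⟩ := mem_ColU.mp hp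
  obtain ⟨i₂, hq⟩ := mem_ColU.mp hq
  exact union_conn h.2.2.1 h.2.2.2 (T := {v : Fin r × Fin r | v.2 = j})
    (show ((i₁, j) : Fin r × Fin r) ∈ {v : Fin r × Fin r | v.2 = j} from rfl) (col_conn j i₁ i₂) hp hq

theorem RowU_disj {i i' : Fin r} (hne : i ≠ i') : Disjoint (RowU μ i) (RowU μ i') := by
  rw [Set.disjoint_left]
  intro p hp hp'
  obtain ⟨j, hj⟩ := mem_RowU.mp hp
  obtain ⟨j', hj'⟩ := mem_RowU.mp hp'
  have : (i, j) ≠ (i', j') := fun hc => hne (congrArg Prod.fst hc)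
  exact (h.2.1 this).ne_of_mem hj hj' rfl

theorem ColU_disj {j j' : Fin r} (hne : j ≠ j') : Disjoint (ColU μ j) (ColU μ j') := by
  rw [Set.disjoint_left]
  intro p hp hp'
  obtain ⟨i, hi⟩ := mem_ColU.mp hp
  obtain ⟨i', hi'⟩ := mem_ColU.mp hp'
  have : (i, j) ≠ (i', j') := fun hc => hne (congrArg Prod.snd hc)
  exact (h.2.1 this).ne_of_mem hi hi' rfl

end Grid

end Aux

namespace Aux

theorem card_le_of_common_snd {a b r : ℕ} {U : Fin r → Set (Fin a × Fin b)}
    (hdisj : ∀ i i' : Fin r, i ≠ i' → Disjoint (U i) (U i')) {k : ℕ}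
    (hk : ∀ i, ∃ w ∈ U i, (w.2 : ℕ) = k) : r ≤ a := by
  choose w hw hwk using hk
  have hinj : Function.Injective (fun i => (w i).1) := by
    intro i i' he
    by_contra hne
    have he2 : w i = w i' := Prod.ext he (Fin.ext (by rw [hwk i, hwk i']))
    exact (hdisj i i' hne).ne_of_mem (hw i) (he2 ▸ hw i') rfl
  simpa using Fintype.card_le_of_injective _ hinj

theorem card_le_of_common_fst {a b r : ℕ} {U : Fin r → Set (Fin a × Fin b)}
    (hdisj : ∀ i i' : Fin r, i ≠ i' → Disjoint (U i) (U i')) {k : ℕ}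
    (hk : ∀ i, ∃ w ∈ U i, (w.1 : ℕ) = k) : r ≤ b := by
  choose w hw hwk using hk
  have hinj : Function.Injective (fun i => (w i).2) := by
    intro i i' he
    by_contra hne
    have he2 : w i = w i' := Prod.ext (Fin.ext (by rw [hwk i, hwk i'])) he
    exact (hdisj i i' hne).ne_of_mem (hw i) (he2 ▸ hw i') rfl
  simpa using Fintype.card_le_of_injective _ hinj

/-- Dimension bound: an `r × r` grid minor in an `a × b` grid forces `r ≤ a` and
`r ≤ b`. -/
theorem dim_le {a b r : ℕ} (hr : 1 ≤ r) {μ : Fin r × Fin r → Set (Fin a × Fin b)}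
    (h : IsMinorMapping (gridGraph a b) (gridGraph r r) μ) : r ≤ a ∧ r ≤ b := by
  classical
  set i0 : Fin r := ⟨0, hr⟩ with hi0
  have key : ∀ f : Fin a × Fin b → ℕ,
      (∀ x y, (gridGraph a b).Adj x y → f y ≤ f x + 1 ∧ f x ≤ f y + 1) →
      (∃ k, ∀ i, ∃ w ∈ RowU μ i, f w = k) ∨ (∃ k, ∀ j, ∃ w ∈ ColU μ j, f w = k) := by
    intro f hstep
    set If : Fin r → Finset ℕ :=
      fun i => ((Set.toFinite (RowU μ i)).toFinset.image f) with hIf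
    set Jf : Fin r → Finset ℕ :=
      fun j => ((Set.toFinite (ColU μ j)).toFinset.image f) with hJf
    have hmemI : ∀ i k, k ∈ If i ↔ ∃ w ∈ RowU μ i, f w = k := by
      intro i k
      simp only [hIf, Finset.mem_image, Set.Finite.mem_toFinset]
    have hmemJ : ∀ j k, k ∈ Jf j ↔ ∃ w ∈ ColU μ j, f w = k := by
      intro j k
      simp only [hJf, Finset.mem_image, Set.Finite.mem_toFinset]
    have hIne : ∀ i, (If i).Nonempty := by
      intro i
      obtain ⟨p, hp⟩ := h.1 (i, i0)
      exact ⟨f p, (hmemI i _).mpr ⟨p, mem_RowU.mpr ⟨i0, hp⟩, rfl⟩⟩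
    have hJne : ∀ j, (Jf j).Nonempty := by
      intro j
      obtain ⟨p, hp⟩ := h.1 (i0, j)
      exact ⟨f p, (hmemJ j _).mpr ⟨p, mem_ColU.mpr ⟨i0, hp⟩, rfl⟩⟩
    have hIconv : ∀ i k₁ k₂ k, k₁ ∈ If i → k₂ ∈ If i → k₁ ≤ k → k ≤ k₂ → k ∈ If i := by
      intro i k₁ k₂ k h1 h2 hk1 hk2
      obtain ⟨p, hp, rfl⟩ := (hmemI i _).mp h1
      obtain ⟨q, hq, rfl⟩ := (hmemI i _).mp h2
      obtain ⟨w, hw, hwk⟩ := conn_ivt f hstep (RowU_conn h hp hq) hp k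
        (by omega) (by omega)
      exact (hmemI i _).mpr ⟨w, hw, hwk⟩
    have hJconv : ∀ j k₁ k₂ k, k₁ ∈ Jf j → k₂ ∈ Jf j → k₁ ≤ k → k ≤ k₂ → k ∈ Jf j := by
      intro j k₁ k₂ k h1 h2 hk1 hk2
      obtain ⟨p, hp, rfl⟩ := (hmemJ j _).mp h1
      obtain ⟨q, hq, rfl⟩ := (hmemJ j _).mp h2
      obtain ⟨w, hw, hwk⟩ := conn_ivt f hstep (ColU_conn h hp hq) hp k
        (by omega) (by omega)
      exact (hmemJ j _).mpr ⟨w, hw, hwk⟩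
    have hmeet : ∀ i j, ∃ k, k ∈ If i ∧ k ∈ Jf j := by
      intro i j
      obtain ⟨p, hp⟩ := h.1 (i, j)
      exact ⟨f p, (hmemI i _).mpr ⟨p, mem_RowU.mpr ⟨j, hp⟩, rfl⟩,
        (hmemJ j _).mpr ⟨p, mem_ColU.mpr ⟨i, hp⟩, rfl⟩⟩
    rcases cross_intervals If Jf hIne hJne hIconv hJconv hmeet hr hr with ⟨k, hk⟩ | ⟨k, hk⟩
    · exact Or.inl ⟨k, fun i => (hmemI i k).mp (hk i)⟩
    · exact Or.inr ⟨k, fun j => (hmemJ j k).mp (hk j)⟩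
  constructor
  · rcases key (fun p => (p.2 : ℕ)) (fun x y hxy => grid_adj_step2 hxy) with ⟨k, hk⟩ | ⟨k, hk⟩
    · exact card_le_of_common_snd (fun i i' hne => RowU_disj h hne) hk
    · exact card_le_of_common_snd (fun j j' hne => ColU_disj h hne) hk
  · rcases key (fun p => (p.1 : ℕ)) (fun x y hxy => grid_adj_step1 hxy) with ⟨k, hk⟩ | ⟨k, hk⟩
    · exact card_le_of_common_fst (fun i i' hne => RowU_disj h hne) hk
    · exact card_le_of_common_fst (fun j j' hne => ColU_disj h hne) hk

end Aux

namespace Aux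

/-- Counting first-row representatives inside a confined side `B` of the cut. -/
theorem grid_count {a b r : ℕ} (hr : 1 ≤ r)
    {μ : Fin r × Fin r → Set (Fin a × Fin b)}
    (h : IsMinorMapping (gridGraph a b) (gridGraph r r) μ)
    (q : Fin r × Fin r → Fin a × Fin b)
    (hq : ∀ v, (v.1 : ℕ) = 0 → q v ∈ μ v)
    (A B : Set (Fin a × Fin b))
    (hBcross : ∀ x y, (gridGraph a b).Adj x y → x ∈ B → y ∉ B →
      s(x, y) ∈ {e : Sym2 (Fin a × Fin b) | e ∈ (gridGraph a b).edgeSet ∧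
        ∃ u ∈ A, ∃ v ∈ Aᶜ, e = s(u, v)})
    (hconf : B.ncard ≤ cutSize (gridGraph a b) A * cutSize (gridGraph a b) A) :
    (B ∩ {p | ∃ v : Fin r × Fin r, (v.1 : ℕ) = 0 ∧ q v = p}).ncard
      ≤ 2 * cutSize (gridGraph a b) A := by
  classical
  set c := cutSize (gridGraph a b) A with hc
  set i0 : Fin r := ⟨0, hr⟩ with hi0
  set T : Finset (Fin r) := Finset.univ.filter (fun j => q (i0, j) ∈ B) with hT
  -- Step A : the representative set in B injects into T
  have stepA : (B ∩ {p | ∃ v : Fin r × Fin r, (v.1 : ℕ) = 0 ∧ q v = p}).ncard ≤ T.card := by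
    have hsub : (B ∩ {p | ∃ v : Fin r × Fin r, (v.1 : ℕ) = 0 ∧ q v = p})
        ⊆ ↑(T.image (fun j => q (i0, j))) := by
      rintro p ⟨hpB, v, hv0, rfl⟩
      have hv : v = (i0, v.2) := by
        rw [Prod.ext_iff]
        exact ⟨Fin.ext (by simpa using hv0), rfl⟩
      rw [hv] at hpB ⊢
      exact Finset.mem_coe.mpr (Finset.mem_image.mpr
        ⟨v.2, Finset.mem_filter.mpr ⟨Finset.mem_univ _, hpB⟩, rfl⟩)
    calc (B ∩ {p | ∃ v : Fin r × Fin r, (v.1 : ℕ) = 0 ∧ q v = p}).ncard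
        ≤ (↑(T.image (fun j => q (i0, j))) : Set (Fin a × Fin b)).ncard :=
          Set.ncard_le_ncard hsub (Set.toFinite _)
      _ = (T.image (fun j => q (i0, j))).card := Set.ncard_coe_finset _
      _ ≤ T.card := Finset.card_image_le
  set T₁ : Finset (Fin r) := T.filter (fun j => ColU μ j ⊆ B) with hT₁
  set T₂ : Finset (Fin r) := T.filter (fun j => ¬ ColU μ j ⊆ B) with hT₂
  have hTsplit : T₁.card + T₂.card = T.card := Finset.card_filter_add_card_filter_not _
  -- Step B : columns not contained in B give crossing edges
  have stepB : T₂.card ≤ c := by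
    apply count_disj_le_cutSize T₂ (fun j => ColU μ j)
    · intro i hi j hj hne
      exact ColU_disj h hne
    · intro j hj
      obtain ⟨hjT, hjnotsub⟩ := Finset.mem_filter.mp hj
      obtain ⟨y, hyC, hyB⟩ := Set.not_subset.mp hjnotsub
      have hqmem : q (i0, j) ∈ ColU μ j :=
        mem_ColU.mpr ⟨i0, hq (i0, j) rfl⟩
      have hqB : q (i0, j) ∈ B := (Finset.mem_filter.mp hjT).2
      obtain ⟨x, hxC, y', hy'C, hadj, hxB, hy'B⟩ :=
        conn_cross (ColU_conn h hqmem hyC) hqB hyB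
      exact ⟨x, hxC, y', hy'C, hadj, hBcross x y' hadj hxB hy'B⟩
  -- Step C : columns contained in B are few since B is small
  have stepC : T₁.card ≤ c := by
    have hcol_card : ∀ j : Fin r, r ≤ ((Set.toFinite (ColU μ j)).toFinset).card := by
      intro j
      have hpt : ∀ i : Fin r, ∃ p, p ∈ μ (i, j) := fun i => h.1 (i, j)
      choose pt hpt using hpt
      have := Finset.card_le_card_of_injOn (f := pt) (s := Finset.univ)
        (t := (Set.toFinite (ColU μ j)).toFinset)
        (fun i _ => (Set.Finite.mem_toFinset _).mpr (mem_ColU.mpr ⟨i, hpt i⟩))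
        (by
          intro i _ i' _ he
          by_contra hne
          have hne' : ((i, j) : Fin r × Fin r) ≠ (i', j) :=
            fun hcon => hne (congrArg Prod.fst hcon)
          exact (h.2.1 hne').ne_of_mem (hpt i) (he ▸ hpt i') rfl)
      simpa using this
    have hmul : T₁.card * r ≤ B.ncard := by
      have hbi : (T₁.biUnion (fun j => (Set.toFinite (ColU μ j)).toFinset))
          ⊆ (Set.toFinite B).toFinset := by
        intro p hp
        obtain ⟨j, hj, hpj⟩ := Finset.mem_biUnion.mp hp
        exact (Set.Finite.mem_toFinset _).mpr
          ((Finset.mem_filter.mp hj).2 ((Set.Finite.mem_toFinset _).mp hpj))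
      have hdisj' : ∀ j ∈ T₁, ∀ j' ∈ T₁, j ≠ j' →
          Disjoint ((Set.toFinite (ColU μ j)).toFinset)
            ((Set.toFinite (ColU μ j')).toFinset) := by
        intro j _ j' _ hne
        rw [Finset.disjoint_left]
        intro p hp hp'
        exact (ColU_disj h hne).ne_of_mem ((Set.Finite.mem_toFinset _).mp hp)
          ((Set.Finite.mem_toFinset _).mp hp') rfl
      calc T₁.card * r = ∑ _j ∈ T₁, r := by rw [Finset.sum_const, smul_eq_mul]
        _ ≤ ∑ j ∈ T₁, ((Set.toFinite (ColU μ j)).toFinset).card :=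
            Finset.sum_le_sum (fun j _ => hcol_card j)
        _ = (T₁.biUnion (fun j => (Set.toFinite (ColU μ j)).toFinset)).card :=
            (Finset.card_biUnion hdisj').symm
        _ ≤ ((Set.toFinite B).toFinset).card := Finset.card_le_card hbi
        _ = B.ncard := by
            rw [← Set.ncard_coe_finset, Set.Finite.coe_toFinset]
    have hT₁r : T₁.card ≤ r := by
      refine le_trans (Finset.card_le_card (Finset.filter_subset _ _)) ?_
      refine le_trans (Finset.card_filter_le _ _) (by simp)
    by_contra hcon
    push_neg at hcon
    have h1 : (c + 1) * (c + 1) ≤ T₁.card * T₁.card := Nat.mul_le_mul hcon hcon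
    have h2 : T₁.card * T₁.card ≤ T₁.card * r := Nat.mul_le_mul_left _ hT₁r
    have h3 : (c + 1) * (c + 1) ≤ c * c := le_trans h1 (le_trans h2 (le_trans hmul hconf))
    nlinarith
  calc (B ∩ {p | ∃ v : Fin r × Fin r, (v.1 : ℕ) = 0 ∧ q v = p}).ncard
      ≤ T.card := stepA
    _ = T₁.card + T₂.card := hTsplit.symm
    _ ≤ 2 * c := by omega

end Aux

namespace Aux

open scoped Classical

theorem mixed_rows_card {a b : ℕ} (A : Set (Fin a × Fin b)) :
    (Finset.univ.filter (fun x : Fin a =>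
      (∃ y, (x, y) ∈ A) ∧ (∃ y, (x, y) ∉ A))).card ≤ cutSize (gridGraph a b) A := by
  classical
  apply count_disj_le_cutSize _ (fun x => {p : Fin a × Fin b | p.1 = x})
  · intro x _ x' _ hne
    rw [Set.disjoint_left]
    rintro p (rfl : p.1 = x) (h' : p.1 = x')
    exact hne h'
  · intro x hx
    obtain ⟨⟨y₁, h1⟩, ⟨y₂, h2⟩⟩ := (Finset.mem_filter.mp hx).2
    obtain ⟨u, hu, v, hv, hadj, huA, hvA⟩ :=
      conn_cross (row_conn x y₁ y₂) h1 h2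
    exact ⟨u, hu, v, hv, hadj, crossing_mem hadj huA hvA⟩

theorem mixed_cols_card {a b : ℕ} (A : Set (Fin a × Fin b)) :
    (Finset.univ.filter (fun y : Fin b =>
      (∃ x, (x, y) ∈ A) ∧ (∃ x, (x, y) ∉ A))).card ≤ cutSize (gridGraph a b) A := by
  classical
  apply count_disj_le_cutSize _ (fun y => {p : Fin a × Fin b | p.2 = y})
  · intro y _ y' _ hne
    rw [Set.disjoint_left]
    rintro p (rfl : p.2 = y) (h' : p.2 = y')
    exact hne h'
  · intro y hy
    obtain ⟨⟨x₁, h1⟩, ⟨x₂, h2⟩⟩ := (Finset.mem_filter.mp hy).2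
    obtain ⟨u, hu, v, hv, hadj, huA, hvA⟩ :=
      conn_cross (col_conn y x₁ x₂) h1 h2
    exact ⟨u, hu, v, hv, hadj, crossing_mem hadj huA hvA⟩

/-- Confinement: a set whose every point has mixed row and mixed column is small. -/
theorem confine_card {a b : ℕ} (A : Set (Fin a × Fin b)) (B : Set (Fin a × Fin b))
    (hB : ∀ p ∈ B, ((∃ y, (p.1, y) ∈ A) ∧ (∃ y, (p.1, y) ∉ A)) ∧
      ((∃ x, (x, p.2) ∈ A) ∧ (∃ x, (x, p.2) ∉ A))) :
    B.ncard ≤ cutSize (gridGraph a b) A * cutSize (gridGraph a b) A := by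
  classical
  set MR := Finset.univ.filter (fun x : Fin a =>
    (∃ y, (x, y) ∈ A) ∧ (∃ y, (x, y) ∉ A)) with hMR
  set MC := Finset.univ.filter (fun y : Fin b =>
    (∃ x, (x, y) ∈ A) ∧ (∃ x, (x, y) ∉ A)) with hMC
  have hsub : B ⊆ ↑(MR ×ˢ MC) := by
    intro p hp
    obtain ⟨h1, h2⟩ := hB p hp
    refine Finset.mem_coe.mpr (Finset.mem_product.mpr ⟨?_, ?_⟩)
    · exact Finset.mem_filter.mpr ⟨Finset.mem_univ _, h1⟩
    · exact Finset.mem_filter.mpr ⟨Finset.mem_univ _, h2⟩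
  calc B.ncard ≤ (↑(MR ×ˢ MC) : Set (Fin a × Fin b)).ncard :=
        Set.ncard_le_ncard hsub (Set.toFinite _)
    _ = (MR ×ˢ MC).card := Set.ncard_coe_finset _
    _ = MR.card * MC.card := Finset.card_product _ _
    _ ≤ cutSize (gridGraph a b) A * cutSize (gridGraph a b) A :=
        Nat.mul_le_mul (mixed_rows_card A) (mixed_cols_card A)

/-- The representative set of the first row has at most `r` elements. -/
theorem reps_card {a b r : ℕ} (hr : 1 ≤ r) (q : Fin r × Fin r → Fin a × Fin b) :
    {p | ∃ v : Fin r × Fin r, (v.1 : ℕ) = 0 ∧ q v = p}.ncard ≤ r := by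
  classical
  set i0 : Fin r := ⟨0, hr⟩ with hi0
  have hsub : {p | ∃ v : Fin r × Fin r, (v.1 : ℕ) = 0 ∧ q v = p}
      ⊆ ↑(Finset.univ.image (fun j : Fin r => q (i0, j))) := by
    rintro p ⟨v, hv0, rfl⟩
    have hv : v = (i0, v.2) := by
      rw [Prod.ext_iff]
      exact ⟨Fin.ext (by simpa using hv0), rfl⟩
    rw [hv]
    exact Finset.mem_coe.mpr (Finset.mem_image.mpr ⟨v.2, Finset.mem_univ _, rfl⟩)
  calc {p | ∃ v : Fin r × Fin r, (v.1 : ℕ) = 0 ∧ q v = p}.ncard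
      ≤ (↑(Finset.univ.image (fun j : Fin r => q (i0, j))) : Set (Fin a × Fin b)).ncard :=
        Set.ncard_le_ncard hsub (Set.toFinite _)
    _ = (Finset.univ.image (fun j : Fin r => q (i0, j))).card := Set.ncard_coe_finset _
    _ ≤ r := le_trans Finset.card_image_le (by simp)

end Aux

/-- Linking two grid minors in a grid: if `Z₁`, `Z₂` are vertex-disjoint grid minors of
a grid `Γ`, and `Wᵢ` consists of one representative from the branch set of each
first-row vertex of `Zᵢ`, then `W₁ ∪ W₂` is `(1/384)`-cut-linked in `Γ`. -/
theorem stmt5 (a b r₁ r₂ : ℕ) (ha : 1 ≤ a) (hb : 1 ≤ b)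
    (hr₁ : 1 ≤ r₁) (h12 : r₁ ≤ r₂)
    (μ₁ : Fin r₁ × Fin r₁ → Set (Fin a × Fin b))
    (μ₂ : Fin r₂ × Fin r₂ → Set (Fin a × Fin b))
    (h₁ : IsMinorMapping (gridGraph a b) (gridGraph r₁ r₁) μ₁)
    (h₂ : IsMinorMapping (gridGraph a b) (gridGraph r₂ r₂) μ₂)
    (hdisj : (⋃ v, μ₁ v) ∩ (⋃ v, μ₂ v) = ∅)
    (q₁ : Fin r₁ × Fin r₁ → Fin a × Fin b)
    (q₂ : Fin r₂ × Fin r₂ → Fin a × Fin b)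
    (hq₁ : ∀ v, (v.1 : ℕ) = 0 → q₁ v ∈ μ₁ v)
    (hq₂ : ∀ v, (v.1 : ℕ) = 0 → q₂ v ∈ μ₂ v) :
    CutLinked (gridGraph a b) (1 / 384)
      ({p | ∃ v : Fin r₁ × Fin r₁, (v.1 : ℕ) = 0 ∧ q₁ v = p} ∪
       {p | ∃ v : Fin r₂ × Fin r₂, (v.1 : ℕ) = 0 ∧ q₂ v = p}) := by
  classical
  intro A
  set c := cutSize (gridGraph a b) A with hc
  set W₁ : Set (Fin a × Fin b) :=
    {p | ∃ v : Fin r₁ × Fin r₁, (v.1 : ℕ) = 0 ∧ q₁ v = p} with hW₁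
  set W₂ : Set (Fin a × Fin b) :=
    {p | ∃ v : Fin r₂ × Fin r₂, (v.1 : ℕ) = 0 ∧ q₂ v = p} with hW₂
  have hr₂ : 1 ≤ r₂ := le_trans hr₁ h12
  have hd₂ := Aux.dim_le hr₂ h₂
  have hX : (W₁ ∪ W₂).ncard ≤ r₁ + r₂ :=
    le_trans (Set.ncard_union_le _ _)
      (Nat.add_le_add (Aux.reps_card hr₁ q₁) (Aux.reps_card hr₂ q₂))
  have main : min ((A ∩ (W₁ ∪ W₂)).ncard) ((Aᶜ ∩ (W₁ ∪ W₂)).ncard) ≤ 4 * c := by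
    by_cases hAr : ∃ x : Fin a, ∀ y, (x, y) ∈ A
    · by_cases hBr : ∃ x : Fin a, ∀ y, (x, y) ∉ A
      · -- a pure-`A` row and a pure-`Aᶜ` row force every column to be mixed
        obtain ⟨x₁, h1⟩ := hAr
        obtain ⟨x₂, h2⟩ := hBr
        have hall : ∀ y : Fin b, (∃ x, (x, y) ∈ A) ∧ (∃ x, (x, y) ∉ A) :=
          fun y => ⟨⟨x₁, h1 y⟩, ⟨x₂, h2 y⟩⟩
        have hbc : b ≤ c := by
          have hmc := Aux.mixed_cols_card (a := a) A
          rwa [Finset.filter_true_of_mem (fun y _ => hall y), Finset.card_univ,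
            Fintype.card_fin] at hmc
        have h4 : r₂ ≤ b := hd₂.2
        calc min ((A ∩ (W₁ ∪ W₂)).ncard) ((Aᶜ ∩ (W₁ ∪ W₂)).ncard)
            ≤ (A ∩ (W₁ ∪ W₂)).ncard := min_le_left _ _
          _ ≤ (W₁ ∪ W₂).ncard :=
              Set.ncard_le_ncard Set.inter_subset_right (Set.toFinite _)
          _ ≤ 4 * c := by omega
      · by_cases hBc : ∃ y : Fin b, ∀ x, (x, y) ∉ A
        · obtain ⟨x₀, hx₀⟩ := hAr
          obtain ⟨y₀, hy₀⟩ := hBc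
          exact absurd (hx₀ y₀) (hy₀ x₀)
        · -- `Aᶜ` is confined to mixed rows and columns
          push_neg at hBr hBc
          have hconf := Aux.confine_card A Aᶜ (by
            intro p hp
            refine ⟨⟨hBr p.1, ⟨p.2, hp⟩⟩, ⟨hBc p.2, ⟨p.1, hp⟩⟩⟩)
          have hg1 := Aux.grid_count hr₁ h₁ q₁ hq₁ A Aᶜ
            (fun x y hadj hx hy => Aux.crossing_mem' hadj hx hy) hconf
          have hg2 := Aux.grid_count hr₂ h₂ q₂ hq₂ A Aᶜ
            (fun x y hadj hx hy => Aux.crossing_mem' hadj hx hy) hconf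
          calc min ((A ∩ (W₁ ∪ W₂)).ncard) ((Aᶜ ∩ (W₁ ∪ W₂)).ncard)
              ≤ (Aᶜ ∩ (W₁ ∪ W₂)).ncard := min_le_right _ _
            _ = ((Aᶜ ∩ W₁) ∪ (Aᶜ ∩ W₂)).ncard := by
                rw [Set.inter_union_distrib_left]
            _ ≤ (Aᶜ ∩ W₁).ncard + (Aᶜ ∩ W₂).ncard := Set.ncard_union_le _ _
            _ ≤ 2 * c + 2 * c := Nat.add_le_add hg1 hg2
            _ = 4 * c := by ring
    · by_cases hBr : ∃ x : Fin a, ∀ y, (x, y) ∉ A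
      · by_cases hAc : ∃ y : Fin b, ∀ x, (x, y) ∈ A
        · obtain ⟨x₀, hx₀⟩ := hBr
          obtain ⟨y₀, hy₀⟩ := hAc
          exact absurd (hy₀ x₀) (hx₀ y₀)
        · -- `A` is confined to mixed rows and columns
          push_neg at hAr hAc
          have hconf := Aux.confine_card A A (by
            intro p hp
            refine ⟨⟨⟨p.2, hp⟩, hAr p.1⟩, ⟨⟨p.1, hp⟩, hAc p.2⟩⟩)
          have hg1 := Aux.grid_count hr₁ h₁ q₁ hq₁ A A
            (fun x y hadj hx hy => Aux.crossing_mem hadj hx hy) hconf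
          have hg2 := Aux.grid_count hr₂ h₂ q₂ hq₂ A A
            (fun x y hadj hx hy => Aux.crossing_mem hadj hx hy) hconf
          calc min ((A ∩ (W₁ ∪ W₂)).ncard) ((Aᶜ ∩ (W₁ ∪ W₂)).ncard)
              ≤ (A ∩ (W₁ ∪ W₂)).ncard := min_le_left _ _
            _ = ((A ∩ W₁) ∪ (A ∩ W₂)).ncard := by
                rw [Set.inter_union_distrib_left]
            _ ≤ (A ∩ W₁).ncard + (A ∩ W₂).ncard := Set.ncard_union_le _ _
            _ ≤ 2 * c + 2 * c := Nat.add_le_add hg1 hg2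
            _ = 4 * c := by ring
      · -- every row is mixed
        push_neg at hAr hBr
        have hall : ∀ x : Fin a, (∃ y, (x, y) ∈ A) ∧ (∃ y, (x, y) ∉ A) :=
          fun x => ⟨hBr x, hAr x⟩
        have hac : a ≤ c := by
          have hmr := Aux.mixed_rows_card (b := b) A
          rwa [Finset.filter_true_of_mem (fun x _ => hall x), Finset.card_univ,
            Fintype.card_fin] at hmr
        have h4 : r₂ ≤ a := hd₂.1
        calc min ((A ∩ (W₁ ∪ W₂)).ncard) ((Aᶜ ∩ (W₁ ∪ W₂)).ncard)
            ≤ (A ∩ (W₁ ∪ W₂)).ncard := min_le_left _ _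
          _ ≤ (W₁ ∪ W₂).ncard :=
              Set.ncard_le_ncard Set.inter_subset_right (Set.toFinite _)
          _ ≤ 4 * c := by omega
  -- conclude over the reals
  have hmain' : ((min ((A ∩ (W₁ ∪ W₂)).ncard) ((Aᶜ ∩ (W₁ ∪ W₂)).ncard) : ℕ) : ℝ)
      ≤ 384 * (c : ℝ) := by
    have : min ((A ∩ (W₁ ∪ W₂)).ncard) ((Aᶜ ∩ (W₁ ∪ W₂)).ncard) ≤ 384 * c := by omega
    exact_mod_cast this
  rw [div_mul_eq_mul_div, one_mul, div_le_iff₀ (by norm_num : (0 : ℝ) < 384)]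
  linarith
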